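/- Column-shift identity for the Y-program value: Let f(Y) be the optimal value of the Y-program. For each i = 1,…,L−1, let P_i ∈ ℝ^{2L} be the vector whose i-th 2-block is 1₂, whose (i+1)-st 2-block is −1₂, and whose other blocks are zero. Then for every Y ∈ ℝ^{2L×2L} and every v ∈ ℝ^{2L} with 2-blocks v_q ∈ ℝ², one has f(Y + v P_iᵀ) = f(Y) + v_i·μ_i^(1) + v_{i+1}·μ_{i+1}^(1). -/
import Mathlib


open Matrix BigOperators

noncomputable section

abbrev Idx (L : ℕ) := Fin L × Fin 2

/-- The fixed 1-marginal `μ_p^(1) = (1 - ρ_p, ρ_p)ᵀ`. -/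
def mu1 {L : ℕ} (ρ : Fin L → ℝ) (p : Fin L) (t : Fin 2) : ℝ :=
  if t = 0 then 1 - ρ p else ρ p

/-- The dual objective `F(Y, {φ_pq, ψ_pq})`. -/
def dualObj {L : ℕ} (ρ : Fin L → ℝ) (Y : Matrix (Idx L) (Idx L) ℝ)
    (φ ψ : Fin L → Fin L → Fin 2 → ℝ) : ℝ :=
  2 * ∑ p : Fin L, ∑ q : Fin L,
      (if p < q then
        (∑ t : Fin 2, φ p q t * mu1 ρ p t) + (∑ u : Fin 2, ψ p q u * mu1 ρ q u)
       else 0)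
    - ∑ p : Fin L, ∑ t : Fin 2, Y (p, t) (p, t) * mu1 ρ p t

/-- Set of objective values of the `Y`-program. -/
def Yvalues {L : ℕ} (ρ : Fin L → ℝ) (C Y : Matrix (Idx L) (Idx L) ℝ) : Set ℝ :=
  {x | ∃ φ ψ : Fin L → Fin L → Fin 2 → ℝ,
    (∀ p q : Fin L, p < q → ∀ t u : Fin 2,
        φ p q t + ψ p q u ≤ C (p, t) (q, u) - Y (p, t) (q, u)) ∧
    x = dualObj ρ Y φ ψ}

/-- The optimal value `f(Y)` of the `Y`-program. -/
def fval {L : ℕ} (ρ : Fin L → ℝ) (C Y : Matrix (Idx L) (Idx L) ℝ) : ℝ :=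
  sSup (Yvalues ρ C Y)

/-- The vector `P_i` whose `i`-th 2-block is `1₂`, whose `(i+1)`-st 2-block is `-1₂`,
and whose other blocks vanish. -/
def Pvec {L : ℕ} (i : Fin L) (h : (i : ℕ) + 1 < L) : Idx L → ℝ :=
  fun a => if a.1 = i then 1 else if a.1 = ⟨(i : ℕ) + 1, h⟩ then -1 else 0

-- auxiliary
def Pq {L : ℕ} (i : Fin L) (h : (i : ℕ) + 1 < L) (q : Fin L) : ℝ := Pvec i h (q, 0)

lemma Pvec_eq {L : ℕ} (i : Fin L) (h : (i : ℕ) + 1 < L) (a : Idx L) :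
    Pvec i h a = Pq i h a.1 := rfl

lemma Pq_def {L : ℕ} (i : Fin L) (h : (i : ℕ) + 1 < L) (q : Fin L) :
    Pq i h q = if q = i then 1 else if q = ⟨(i : ℕ) + 1, h⟩ then -1 else 0 := rfl

lemma mu1_nonneg {L : ℕ} {ρ : Fin L → ℝ} (hρ : ∀ p, 0 ≤ ρ p ∧ ρ p ≤ 1)
    (p : Fin L) (t : Fin 2) : 0 ≤ mu1 ρ p t := by
  unfold mu1; split
  · linarith [(hρ p).2]
  · exact (hρ p).1

lemma mu1_le_one {L : ℕ} {ρ : Fin L → ℝ} (hρ : ∀ p, 0 ≤ ρ p ∧ ρ p ≤ 1)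
    (p : Fin L) (t : Fin 2) : mu1 ρ p t ≤ 1 := by
  unfold mu1; split
  · linarith [(hρ p).1]
  · exact (hρ p).2

lemma mu1_sum {L : ℕ} (ρ : Fin L → ℝ) (p : Fin L) :
    mu1 ρ p 0 + mu1 ρ p 1 = 1 := by
  simp [mu1]

lemma aux_bound {c B m : ℝ} (hc : c ≤ B) (hm0 : 0 ≤ m) (hm1 : m ≤ 1) : c * m ≤ |B| := by
  rcases le_total c 0 with h | h
  · exact le_trans (mul_nonpos_of_nonpos_of_nonneg h hm0) (abs_nonneg B)
  · calc c * m ≤ c * 1 := by nlinarith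
    _ = c := mul_one c
    _ ≤ |B| := hc.trans (le_abs_self B)

lemma Yvalues_nonempty {L : ℕ} (ρ : Fin L → ℝ) (C Y : Matrix (Idx L) (Idx L) ℝ) :
    (Yvalues ρ C Y).Nonempty := by
  refine ⟨_, fun p q t => min (C (p, t) (q, 0) - Y (p, t) (q, 0))
      (C (p, t) (q, 1) - Y (p, t) (q, 1)), fun _ _ _ => 0, ?_, rfl⟩
  intro p q hpq t u
  fin_cases u
  · simpa using min_le_left _ _
  · simpa using min_le_right _ _

lemma Yvalues_bddAbove {L : ℕ} {ρ : Fin L → ℝ} (hρ : ∀ p, 0 ≤ ρ p ∧ ρ p ≤ 1)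
    (C Y : Matrix (Idx L) (Idx L) ℝ) : BddAbove (Yvalues ρ C Y) := by
  classical
  refine ⟨2 * (∑ p : Fin L, ∑ q : Fin L, ∑ t : Fin 2, ∑ u : Fin 2,
      |C (p, t) (q, u) - Y (p, t) (q, u)|) + ∑ p : Fin L, ∑ t : Fin 2, |Y (p, t) (p, t)|, ?_⟩
  rintro x ⟨φ, ψ, hfe, rfl⟩
  unfold dualObj
  have hpq : ∀ p q : Fin L,
      (if p < q then (∑ t : Fin 2, φ p q t * mu1 ρ p t)
          + (∑ u : Fin 2, ψ p q u * mu1 ρ q u) else 0)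
        ≤ ∑ t : Fin 2, ∑ u : Fin 2, |C (p, t) (q, u) - Y (p, t) (q, u)| := by
    intro p q
    split_ifs with hlt
    · simp only [Fin.sum_univ_two]
      have h00 := hfe p q hlt 0 0
      have h01 := hfe p q hlt 0 1
      have h10 := hfe p q hlt 1 0
      have h11 := hfe p q hlt 1 1
      have hp := mu1_sum ρ p
      have hq := mu1_sum ρ q
      have key : φ p q 0 * mu1 ρ p 0 + φ p q 1 * mu1 ρ p 1
          + (ψ p q 0 * mu1 ρ q 0 + ψ p q 1 * mu1 ρ q 1)
          = (φ p q 0 + ψ p q 0) * (mu1 ρ p 0 * mu1 ρ q 0)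
          + (φ p q 0 + ψ p q 1) * (mu1 ρ p 0 * mu1 ρ q 1)
          + ((φ p q 1 + ψ p q 0) * (mu1 ρ p 1 * mu1 ρ q 0)
          + (φ p q 1 + ψ p q 1) * (mu1 ρ p 1 * mu1 ρ q 1)) := by
        linear_combination (-(φ p q 0 * mu1 ρ p 0 + φ p q 1 * mu1 ρ p 1)) * hq
          - (ψ p q 0 * mu1 ρ q 0 + ψ p q 1 * mu1 ρ q 1) * hp
      rw [key]
      have hm : ∀ (a b : Fin 2), 0 ≤ mu1 ρ p a * mu1 ρ q b ∧ mu1 ρ p a * mu1 ρ q b ≤ 1 := by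
        intro a b
        constructor
        · exact mul_nonneg (mu1_nonneg hρ p a) (mu1_nonneg hρ q b)
        · exact mul_le_one₀ (mu1_le_one hρ p a) (mu1_nonneg hρ q b) (mu1_le_one hρ q b)
      have b00 := aux_bound h00 (hm 0 0).1 (hm 0 0).2
      have b01 := aux_bound h01 (hm 0 1).1 (hm 0 1).2
      have b10 := aux_bound h10 (hm 1 0).1 (hm 1 0).2
      have b11 := aux_bound h11 (hm 1 1).1 (hm 1 1).2
      linarith
    · positivity
  have h1 : ∑ p : Fin L, ∑ q : Fin L,
      (if p < q then (∑ t : Fin 2, φ p q t * mu1 ρ p t)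
          + (∑ u : Fin 2, ψ p q u * mu1 ρ q u) else 0)
      ≤ ∑ p : Fin L, ∑ q : Fin L, ∑ t : Fin 2, ∑ u : Fin 2,
          |C (p, t) (q, u) - Y (p, t) (q, u)| := by
    apply Finset.sum_le_sum
    intro p _
    exact Finset.sum_le_sum fun q _ => hpq p q
  have h2 : -(∑ p : Fin L, ∑ t : Fin 2, Y (p, t) (p, t) * mu1 ρ p t)
      ≤ ∑ p : Fin L, ∑ t : Fin 2, |Y (p, t) (p, t)| := by
    rw [← Finset.sum_neg_distrib]
    apply Finset.sum_le_sum
    intro p _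
    rw [← Finset.sum_neg_distrib]
    apply Finset.sum_le_sum
    intro t _
    have : -(Y (p, t) (p, t) * mu1 ρ p t) = (-(Y (p, t) (p, t))) * mu1 ρ p t := by ring
    rw [this]
    calc (-(Y (p, t) (p, t))) * mu1 ρ p t ≤ |(-(Y (p, t) (p, t)))| :=
          aux_bound (le_refl _) (mu1_nonneg hρ p t) (mu1_le_one hρ p t)
      _ = |Y (p, t) (p, t)| := abs_neg _
  linarith

lemma sSup_image_add (S : Set ℝ) (hne : S.Nonempty) (hbdd : BddAbove S) (c : ℝ) :
    sSup ((fun x => x + c) '' S) = sSup S + c := by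
  have hl := isLUB_csSup hne hbdd
  have : IsLUB ((fun x => x + c) '' S) (sSup S + c) := by
    constructor
    · rintro y ⟨x, hx, rfl⟩
      have := hl.1 hx
      show x + c ≤ sSup S + c
      linarith
    · intro b hb
      have : sSup S ≤ b - c := hl.2 (fun x hx => by
        have hxb : x + c ≤ b := hb ⟨x, hx, rfl⟩
        linarith)
      linarith
  exact this.csSup_eq (hne.image _)

lemma dualObj_shift {L : ℕ} (ρ : Fin L → ℝ) (Y : Matrix (Idx L) (Idx L) ℝ)
    (v : Idx L → ℝ) (i : Fin L) (h : (i : ℕ) + 1 < L)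
    (φ ψ : Fin L → Fin L → Fin 2 → ℝ) :
    dualObj ρ (Y + Matrix.of fun a b => v a * Pvec i h b) φ ψ
      = dualObj ρ Y (fun p q t => φ p q t + v (p, t) * Pq i h q) ψ
        + ((∑ t : Fin 2, v (i, t) * mu1 ρ i t)
          + (∑ t : Fin 2, v (⟨(i : ℕ) + 1, h⟩, t) * mu1 ρ ⟨(i : ℕ) + 1, h⟩ t)) := by
  classical
  set i1 : Fin L := ⟨(i : ℕ) + 1, h⟩ with hi1
  have hii1 : i ≠ i1 := by
    intro hc
    have : (i : ℕ) = (i : ℕ) + 1 := congrArg Fin.val hc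
    omega
  set w : Fin L → ℝ := fun p => ∑ t : Fin 2, v (p, t) * mu1 ρ p t with hw
  -- diagonal part
  have hdiag : ∑ p : Fin L, ∑ t : Fin 2,
      (Y + Matrix.of fun a b => v a * Pvec i h b) (p, t) (p, t) * mu1 ρ p t
      = (∑ p : Fin L, ∑ t : Fin 2, Y (p, t) (p, t) * mu1 ρ p t)
        + ∑ p : Fin L, Pq i h p * w p := by
    rw [← Finset.sum_add_distrib]
    apply Finset.sum_congr rfl
    intro p _
    rw [hw, Finset.mul_sum, ← Finset.sum_add_distrib]
    apply Finset.sum_congr rfl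
    intro t _
    simp only [Matrix.add_apply, Matrix.of_apply, Pvec_eq]
    ring
  -- off-diagonal objective part
  have hoff : ∑ p : Fin L, ∑ q : Fin L,
      (if p < q then (∑ t : Fin 2, (φ p q t + v (p, t) * Pq i h q) * mu1 ρ p t)
          + (∑ u : Fin 2, ψ p q u * mu1 ρ q u) else 0)
      = (∑ p : Fin L, ∑ q : Fin L,
          (if p < q then (∑ t : Fin 2, φ p q t * mu1 ρ p t)
            + (∑ u : Fin 2, ψ p q u * mu1 ρ q u) else 0))
        + ∑ p : Fin L, ∑ q : Fin L, (if p < q then Pq i h q * w p else 0) := by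
    rw [← Finset.sum_add_distrib]
    apply Finset.sum_congr rfl
    intro p _
    rw [← Finset.sum_add_distrib]
    apply Finset.sum_congr rfl
    intro q _
    split_ifs with hpq
    · have : ∑ t : Fin 2, (φ p q t + v (p, t) * Pq i h q) * mu1 ρ p t
          = (∑ t : Fin 2, φ p q t * mu1 ρ p t) + Pq i h q * w p := by
        rw [hw, Finset.mul_sum, ← Finset.sum_add_distrib]
        apply Finset.sum_congr rfl
        intro t _
        ring
      rw [this]; ring
    · ring
  -- the two correction sums
  set A : Fin L → ℝ := fun q => ∑ p : Fin L, (if p < q then w p else 0) with hA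
  have hkey : ∀ p : Fin L, (if p < i1 then w p else 0) - (if p < i then w p else 0)
      = (if p = i then w p else 0) := by
    intro p
    rcases eq_or_ne p i with rfl | hpi
    · have h1 : p < i1 := by
        rw [Fin.lt_def]; simp [hi1]
      have h2 : ¬ p < p := lt_irrefl p
      simp [h1, h2]
    · have hval : (p : ℕ) ≠ (i : ℕ) := fun hh => hpi (Fin.ext hh)
      have heq : (p < i1) ↔ (p < i) := by
        rw [Fin.lt_def, Fin.lt_def]
        simp only [hi1]
        omega
      simp [heq, hpi]
  have hAdiff : A i1 - A i = w i := by
    rw [hA]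
    simp only
    rw [← Finset.sum_sub_distrib]
    rw [Finset.sum_congr rfl (fun p _ => hkey p)]
    simp
  have hT1 : ∑ p : Fin L, ∑ q : Fin L, (if p < q then Pq i h q * w p else 0)
      = -(w i) := by
    rw [Finset.sum_comm]
    have step : ∀ q : Fin L, ∑ p : Fin L, (if p < q then Pq i h q * w p else 0)
        = Pq i h q * A q := by
      intro q
      rw [hA]
      simp only [Finset.mul_sum, mul_ite, mul_zero]
    rw [Finset.sum_congr rfl (fun q _ => step q)]
    have dec : ∀ q : Fin L, Pq i h q * A q
        = (if q = i then A q else 0) + (if q = i1 then -(A q) else 0) := by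
      intro q
      rw [Pq_def]
      split_ifs with h1 h2 <;> try ring
      · exact absurd (h1 ▸ h2 : (i : Fin L) = i1) hii1
    rw [Finset.sum_congr rfl (fun q _ => dec q), Finset.sum_add_distrib]
    simp only [Finset.sum_ite_eq', Finset.mem_univ, if_true]
    linarith [hAdiff]
  have hT2 : ∑ p : Fin L, Pq i h p * w p = w i - w i1 := by
    have dec : ∀ p : Fin L, Pq i h p * w p
        = (if p = i then w p else 0) + (if p = i1 then -(w p) else 0) := by
      intro p
      rw [Pq_def]
      split_ifs with h1 h2 <;> try ring
      · exact absurd (h1 ▸ h2 : (i : Fin L) = i1) hii1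
    rw [Finset.sum_congr rfl (fun p _ => dec p), Finset.sum_add_distrib]
    simp only [Finset.sum_ite_eq', Finset.mem_univ, if_true]
    ring
  unfold dualObj
  rw [hdiag, hoff, hT1, hT2]
  have hwi : w i = ∑ t : Fin 2, v (i, t) * mu1 ρ i t := rfl
  have hwi1 : w i1 = ∑ t : Fin 2, v (i1, t) * mu1 ρ i1 t := rfl
  rw [← hwi, ← hwi1]
  ring

lemma Yvalues_shift {L : ℕ} (ρ : Fin L → ℝ) (C Y : Matrix (Idx L) (Idx L) ℝ)
    (v : Idx L → ℝ) (i : Fin L) (h : (i : ℕ) + 1 < L) :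
    Yvalues ρ C (Y + Matrix.of fun a b => v a * Pvec i h b)
      = (fun x => x + ((∑ t : Fin 2, v (i, t) * mu1 ρ i t)
          + (∑ t : Fin 2, v (⟨(i : ℕ) + 1, h⟩, t) * mu1 ρ ⟨(i : ℕ) + 1, h⟩ t)))
        '' (Yvalues ρ C Y) := by
  ext x
  simp only [Set.mem_image]
  constructor
  · rintro ⟨φ, ψ, hfe, rfl⟩
    refine ⟨dualObj ρ Y (fun p q t => φ p q t + v (p, t) * Pq i h q) ψ,
      ⟨_, ψ, ?_, rfl⟩, ?_⟩
    · intro p q hpq t u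
      have hc := hfe p q hpq t u
      simp only [Matrix.add_apply, Matrix.of_apply] at hc
      have hP : Pvec i h (q, u) = Pq i h q := rfl
      rw [hP] at hc
      linarith
    · exact (dualObj_shift ρ Y v i h φ ψ).symm
  · rintro ⟨x, ⟨φ, ψ, hfe, rfl⟩, rfl⟩
    refine ⟨fun p q t => φ p q t - v (p, t) * Pq i h q, ψ, ?_, ?_⟩
    · intro p q hpq t u
      have hc := hfe p q hpq t u
      simp only [Matrix.add_apply, Matrix.of_apply]
      have hP : Pvec i h (q, u) = Pq i h q := rfl
      rw [hP]
      linarith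
    · rw [dualObj_shift ρ Y v i h]
      have he : (fun p q t => (φ p q t - v (p, t) * Pq i h q) + v (p, t) * Pq i h q) = φ := by
        funext p q t; ring
      rw [he]


/-- Column-shift identity for the `Y`-program value:
`f(Y + v P_iᵀ) = f(Y) + v_i·μ_i^(1) + v_{i+1}·μ_{i+1}^(1)`. -/
theorem f_column_shift (L : ℕ) (hL : 2 ≤ L) (ρ : Fin L → ℝ)
    (hρ : ∀ p, 0 ≤ ρ p ∧ ρ p ≤ 1)
    (C : Matrix (Idx L) (Idx L) ℝ) (hCsymm : C.IsSymm)
    (hCdiag : ∀ p : Fin L, ∀ t u : Fin 2, C (p, t) (p, u) = 0)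
    (Y : Matrix (Idx L) (Idx L) ℝ)
    (v : Idx L → ℝ) (i : Fin L) (h : (i : ℕ) + 1 < L) :
    fval ρ C (Y + Matrix.of fun a b => v a * Pvec i h b)
      = fval ρ C Y + (∑ t : Fin 2, v (i, t) * mu1 ρ i t)
        + (∑ t : Fin 2, v (⟨(i : ℕ) + 1, h⟩, t) * mu1 ρ ⟨(i : ℕ) + 1, h⟩ t) := by
  rw [fval, Yvalues_shift ρ C Y v i h,
    sSup_image_add _ (Yvalues_nonempty ρ C Y) (Yvalues_bddAbove hρ C Y), fval]
  ring
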